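/- arXiv:2201.08212 — 7 statements merged into one kernel-verified Lean document; each statement's English description precedes it below -/
import Mathlib

section
/- Let p, x, y, t be points in a Euclidean affine space over ℝ such that x lies strictly between p and y (so p ≠ x), and suppose dist p t ^ 2 = dist p x * dist p y (the power-of-a-point relation of the tangent–secant theorem). If dist x y = dist p t (the chord equals the tangent), then dist p y = φ * dist p t and dist p t = φ * dist p x, where φ = (1 + √5)/2 is the golden ratio. -/
/-- Power-of-a-point form: if `x` lies strictly between `p` and `y`,
`dist p t ^ 2 = dist p x * dist p y`, and the chord equals the tangent
(`dist x y = dist p t`), then `dist p y = φ * dist p t` and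
`dist p t = φ * dist p x` with `φ = (1 + √5)/2`. -/
theorem power_point_chord_eq_tangent_golden {V P : Type*} [NormedAddCommGroup V]
    [InnerProductSpace ℝ V] [MetricSpace P] [NormedAddTorsor V P]
    (p x y t : P) (hxy : Sbtw ℝ p x y)
    (hpow : dist p t ^ 2 = dist p x * dist p y)
    (hchord : dist x y = dist p t) :
    dist p y = (1 + Real.sqrt 5) / 2 * dist p t ∧
      dist p t = (1 + Real.sqrt 5) / 2 * dist p x := by
  have hadd := hxy.wbtw.dist_add_dist
  have hb : 0 < dist p x := dist_pos.2 (Ne.symm hxy.ne_left)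
  have ha : 0 < dist x y := dist_pos.2 hxy.ne_right
  set a := dist p t with ha'
  set b := dist p x with hb'
  have ha0 : 0 < a := hchord ▸ ha
  have hy : dist p y = b + a := by rw [← hadd, hchord]
  rw [hy] at hpow
  have hs : Real.sqrt 5 ^ 2 = 5 := Real.sq_sqrt (by norm_num)
  have hs1 : (1:ℝ) ≤ Real.sqrt 5 := by nlinarith [Real.sqrt_nonneg 5]
  set s := Real.sqrt 5
  have h1 : (2*a - (1+s)*b) * (2*a + (s-1)*b) = 0 := by linear_combination 4*hpow - b^2*hs
  have h2 : 2*a + (s-1)*b > 0 := by nlinarith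
  have key : a = (1+s)/2 * b := by
    have := (mul_eq_zero.1 h1).resolve_right (ne_of_gt h2)
    linarith
  constructor
  · rw [hy, key]; nlinarith [hs]
  · exact key
end

section
/- Let p, w, t, x, y be points in the Euclidean plane EuclideanSpace ℝ (Fin 2), let r > 0, and suppose t, x, y lie on the circle of center w and radius r (dist w t = dist w x = dist w y = r), the segment pt is tangent to the circle at t (i.e. the inner product ⟪p − t, w − t⟫ = 0 and p ≠ t), and x lies strictly between p and y. If dist x y = dist p t (the chord equals the tangent), then dist p t / dist p x = φ and dist p y / dist p t = φ, where φ = (1 + √5)/2 is the golden ratio. -/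
open RealInnerProductSpace

/-- Geometric form of the new theorem: in a tangent–secant configuration in the plane,
if the chord equals the tangent then tangent/external-secant and secant/tangent both
equal the golden ratio `(1 + √5)/2`. -/
theorem tangent_secant_config_chord_eq_tangent_golden
    (p w t x y : EuclideanSpace ℝ (Fin 2)) (r : ℝ) (hr : 0 < r)
    (ht : dist w t = r) (hx : dist w x = r) (hy : dist w y = r)
    (htan : ⟪p - t, w - t⟫ = 0) (hpt : p ≠ t)
    (hxy : Sbtw ℝ p x y)
    (hchord : dist x y = dist p t) :
    dist p t / dist p x = (1 + Real.sqrt 5) / 2 ∧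
      dist p y / dist p t = (1 + Real.sqrt 5) / 2 := by
  -- Pythagoras: dist p w ^ 2 = dist p t ^ 2 + dist w t ^ 2
  have hpyth : dist p w ^ 2 = dist p t ^ 2 + r ^ 2 := by
    have h := norm_add_sq_real (p - t) (t - w)
    rw [show p - t + (t - w) = p - w by abel] at h
    have htan' : ⟪p - t, t - w⟫ = 0 := by
      have : ⟪p - t, t - w⟫ = -⟪p - t, w - t⟫ := by
        rw [← inner_neg_right]; congr 1; abel
      rw [this, htan, neg_zero]
    rw [htan'] at h
    simp only [dist_eq_norm]
    rw [show p - w = -(w - p) by abel, norm_neg] at h ⊢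
    have : ‖t - w‖ = ‖w - t‖ := by rw [show t - w = -(w - t) by abel, norm_neg]
    rw [dist_eq_norm] at ht
    nlinarith [h, this]
  -- collinearity for power of a point
  obtain ⟨s, ⟨hs0, hs1⟩, hxs⟩ := hxy.1
  have hs0' : 0 < s := by
    rcases hs0.lt_or_eq with h | h
    · exact h
    · exfalso; apply hxy.ne_left; rw [← hxs, ← h]; simp
  have hline : ∃ k : ℝ, k ≠ 1 ∧ y -ᵥ p = k • (x -ᵥ p) := by
    refine ⟨1 / s, ?_, ?_⟩
    · intro h
      have : s = 1 := by field_simp at h; linarith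
      exact hxy.ne_right (by rw [← hxs, this]; simp [AffineMap.lineMap_apply]) |>.elim
    · have : x -ᵥ p = s • (y -ᵥ p) := by
        rw [← hxs]; simp [AffineMap.lineMap_apply]
      rw [this, smul_smul, one_div, inv_mul_cancel₀ hs0'.ne', one_smul]
  have hpow := EuclideanGeometry.mul_dist_eq_abs_sub_sq_dist
    (hxy.wbtw.collinear.mem_affineSpan_of_mem_of_ne (p₁ := x) (p₂ := y) (p₃ := p)
      (by simp) (by simp) (by simp) hxy.ne_right)
    (by rw [dist_comm x w, dist_comm y w, hx, hy] : dist x w = dist y w)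
  have hpow' : dist p x * dist p y = dist p t ^ 2 := by
    rw [dist_comm p x, dist_comm p y, hpow, dist_comm y w, hy]
    rw [abs_of_nonpos (by nlinarith [sq_nonneg (dist p t)])]
    linarith
  -- distances
  have hpt0 : 0 < dist p t := dist_pos.mpr hpt
  have hpx0 : 0 < dist p x := dist_pos.mpr (Ne.symm hxy.ne_left)
  have hsum : dist p x + dist x y = dist p y := hxy.wbtw.dist_add_dist
  set a := dist p x
  set b := dist p t
  have hb : a * (a + b) = b ^ 2 := by
    rw [show dist p y = a + b by rw [← hsum, hchord]] at hpow'
    linarith [hpow']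
  have hba : b > a := by nlinarith
  have h5 : Real.sqrt 5 ^ 2 = 5 := Real.sq_sqrt (by norm_num)
  have h5pos : 0 < Real.sqrt 5 := Real.sqrt_pos.mpr (by norm_num)
  have key : 2 * b - a = Real.sqrt 5 * a := by
    have hsq : (2 * b - a) ^ 2 = (Real.sqrt 5 * a) ^ 2 := by
      rw [mul_pow, h5]; nlinarith
    have h1 : (0:ℝ) ≤ 2 * b - a := by linarith
    have h2 : (0:ℝ) ≤ Real.sqrt 5 * a := by positivity
    exact (sq_eq_sq₀ h1 h2).mp hsq
  constructor
  · rw [div_eq_iff hpx0.ne']; linarith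
  · rw [show dist p y = a + b by rw [← hsum, hchord], div_eq_iff hpt0.ne']
    have hsq2 : (2 * a + b) ^ 2 = (Real.sqrt 5 * b) ^ 2 := by
      rw [mul_pow, h5]; linear_combination 4 * hb
    have key2 : 2 * a + b = Real.sqrt 5 * b :=
      (sq_eq_sq₀ (by linarith) (mul_nonneg h5pos.le hpt0.le)).mp hsq2
    linarith
end

section
/- Let p, w, t, x, y be points in the Euclidean plane EuclideanSpace ℝ (Fin 2), let r > 0, and suppose t, x, y lie on the circle of center w and radius r, the segment pt is tangent to the circle at t (⟪p − t, w − t⟫ = 0 and p ≠ t), and x lies strictly between p and y. If dist p t = φ * dist p x with φ = (1 + √5)/2 the golden ratio, then dist x y = dist p t. -/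
open RealInnerProductSpace

/-- Geometric converse: in a tangent–secant configuration in the plane, if
`dist p t = φ * dist p x` with `φ = (1 + √5)/2`, then the chord equals the tangent. -/
theorem tangent_secant_config_golden_imp_chord_eq_tangent
    (p w t x y : EuclideanSpace ℝ (Fin 2)) (r : ℝ) (hr : 0 < r)
    (ht : dist w t = r) (hx : dist w x = r) (hy : dist w y = r)
    (htan : ⟪p - t, w - t⟫ = 0) (hpt : p ≠ t)
    (hxy : Sbtw ℝ p x y)
    (hφ : dist p t = (1 + Real.sqrt 5) / 2 * dist p x) :
    dist x y = dist p t := by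
  -- Pythagoras: dist p w ^ 2 = dist p t ^ 2 + r ^ 2
  have hpyth : dist p w ^ 2 = dist p t ^ 2 + r ^ 2 := by
    have h1 : p - w = (p - t) - (w - t) := by abel
    have h2 := norm_sub_sq_real (p - t) (w - t)
    rw [htan] at h2
    have h3 : ‖w - t‖ = r := by rw [← ht, dist_eq_norm]
    rw [dist_eq_norm, dist_eq_norm, h1, h2, h3]
    ring
  -- get k with y - p = k • (x - p)
  obtain ⟨s, hs, hxs⟩ := hxy.1
  have hxp : x ≠ p := hxy.ne_left
  have hxy' : x ≠ y := hxy.ne_right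
  have hxs' : x - p = s • (y - p) := by
    rw [← hxs]
    simp [AffineMap.lineMap_apply]
  have hs0 : s ≠ 0 := by
    rintro rfl
    exact hxp (sub_eq_zero.mp (by rw [hxs']; simp))
  have hs1 : s ≠ 1 := by
    rintro rfl
    rw [one_smul] at hxs'
    exact hxy' (sub_left_inj.mp hxs')
  have hkey : y -ᵥ p = s⁻¹ • (x -ᵥ p) := by
    simp only [vsub_eq_sub, hxs', smul_smul, inv_mul_cancel₀ hs0, one_smul]
  have hk1 : s⁻¹ ≠ 1 := fun h => hs1 (by rw [← inv_inv s, h, inv_one])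
  have hsec : dist x p * dist y p = |dist y w ^ 2 - dist p w ^ 2| :=
    EuclideanGeometry.mul_dist_eq_abs_sub_sq_dist
      (hxy.wbtw.collinear.mem_affineSpan_of_mem_of_ne (by simp) (by simp) (by simp) hxy')
      (by rw [dist_comm x w, dist_comm y w, hx, hy])
  rw [dist_comm y w, hy] at hsec
  have habs : |r ^ 2 - dist p w ^ 2| = dist p t ^ 2 := by
    rw [hpyth]
    have h4 : r ^ 2 - (dist p t ^ 2 + r ^ 2) = -(dist p t ^ 2) := by ring
    rw [h4, abs_neg, abs_of_nonneg (by positivity)]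
  rw [habs] at hsec
  have hdist : dist p x + dist x y = dist p y := hxy.1.dist_add_dist
  have hpx : 0 < dist p x := dist_pos.mpr (Ne.symm hxp)
  have h5 : Real.sqrt 5 ^ 2 = 5 := Real.sq_sqrt (by norm_num)
  rw [dist_comm x p, dist_comm y p, ← hdist] at hsec
  have key : dist p t ^ 2 = dist p x * (dist p x + dist p t) := by
    rw [hφ]; linear_combination (dist p x ^ 2 / 4) * h5
  have := mul_left_cancel₀ hpx.ne' (hsec.trans key)
  linarith
end

section
/- Let p, w, t, x, y be points in the Euclidean plane EuclideanSpace ℝ (Fin 2), let r > 0, and suppose t, x, y lie on the circle of center w and radius r, the segment pt is tangent to the circle at t (⟪p − t, w − t⟫ = 0 and p ≠ t), the points t, x, y are pairwise distinct, and x lies strictly between p and y. Let α = ∠ t p y be the angle at p between the tangent and the secant and β = ∠ x y t the angle at y in the inscribed triangle. Then the chord satisfies dist x y = 2 r * sin (α + 2 β). -/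
open RealInnerProductSpace EuclideanGeometry

noncomputable instance : Fact (Module.finrank ℝ (EuclideanSpace ℝ (Fin 2)) = 2) :=
  ⟨finrank_euclideanSpace_fin⟩

noncomputable instance : Module.Oriented ℝ (EuclideanSpace ℝ (Fin 2)) (Fin 2) :=
  ⟨(EuclideanSpace.basisFun (Fin 2) ℝ).toBasis.orientation⟩

private lemma abs_sin_eq_sin_abs {a : ℝ} (h : |a| ≤ Real.pi) :
    |Real.sin a| = Real.sin |a| := by
  rcases le_or_gt 0 a with ha | ha
  · rw [abs_of_nonneg ha] at h ⊢
    rw [abs_of_nonneg (Real.sin_nonneg_of_nonneg_of_le_pi ha h)]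
  · rw [abs_of_neg ha] at h ⊢
    rw [Real.sin_neg,
      abs_of_nonpos (Real.sin_nonpos_of_nonpos_of_neg_pi_le ha.le (by linarith))]

/-- Equation (11) of the paper, rewritten: in a tangent–secant configuration in the
plane, with `α = ∠ t p y` and `β = ∠ x y t`, the chord satisfies
`dist x y = 2 r * sin (α + 2 β)`. -/
theorem tangent_secant_chord_eq_two_r_sin
    (p w t x y : EuclideanSpace ℝ (Fin 2)) (r : ℝ) (hr : 0 < r)
    (ht : dist w t = r) (hx : dist w x = r) (hy : dist w y = r)
    (htan : ⟪p - t, w - t⟫ = 0) (hpt : p ≠ t)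
    (htx : t ≠ x) (hty : t ≠ y) (hxy' : x ≠ y)
    (hxy : Sbtw ℝ p x y) :
    dist x y = 2 * r * Real.sin (∠ t p y + 2 * ∠ x y t) := by
  have hxt : x ≠ t := htx.symm
  have hyt : y ≠ t := hty.symm
  have hwt : w ≠ t := by
    intro h; rw [h, dist_self] at ht; exact hr.ne' ht.symm
  have hxp : x ≠ p := hxy.ne_left
  have hyp : y ≠ p := hxy.left_ne_right.symm
  have htp : t ≠ p := hpt.symm
  -- the sphere
  have hts : t ∈ (⟨w, r⟩ : EuclideanGeometry.Sphere (EuclideanSpace ℝ (Fin 2))) := by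
    simp [EuclideanGeometry.mem_sphere, dist_comm, ht]
  have hxs : x ∈ (⟨w, r⟩ : EuclideanGeometry.Sphere (EuclideanSpace ℝ (Fin 2))) := by
    simp [EuclideanGeometry.mem_sphere, dist_comm, hx]
  have hys : y ∈ (⟨w, r⟩ : EuclideanGeometry.Sphere (EuclideanSpace ℝ (Fin 2))) := by
    simp [EuclideanGeometry.mem_sphere, dist_comm, hy]
  -- t, x, y are not collinear
  have hcosph : Cospherical ({t, x, y} : Set (EuclideanSpace ℝ (Fin 2))) := by
    refine ⟨w, r, ?_⟩
    rintro q hq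
    rcases hq with rfl | rfl | rfl <;> rw [dist_comm] <;> assumption
  have hncol : ¬Collinear ℝ ({t, x, y} : Set (EuclideanSpace ℝ (Fin 2))) :=
    affineIndependent_iff_not_collinear_set.1
      (hcosph.affineIndependent_of_ne htx hty hxy')
  have hnc2 : ¬Collinear ℝ ({y, t, x} : Set (EuclideanSpace ℝ (Fin 2))) := by
    rwa [show ({y, t, x} : Set (EuclideanSpace ℝ (Fin 2))) = {t, x, y} by
      ext z; simp only [Set.mem_insert_iff, Set.mem_singleton_iff]; tauto]
  have hθ0 : ∠ y t x ≠ 0 := angle_ne_zero_of_not_collinear hnc2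
  have hθπ : ∠ y t x ≠ Real.pi := angle_ne_pi_of_not_collinear hnc2
  -- oriented tangent–chord (doubled): 2 ∡ p t x = 2 ∡ t y x
  have key : (2 : ℤ) • ∡ p t x = (2 : ℤ) • ∡ t y x := by
    have e1 : ∡ p t w + ∡ w t x = ∡ p t x := oangle_add hpt hwt hxt
    have e2 : (2 : ℤ) • ∡ p t w = (Real.pi : Real.Angle) := by
      have h0 := (Orientation.eq_zero_or_oangle_eq_iff_inner_eq_zero
        (Module.Oriented.positiveOrientation)
        (x := p - t) (y := w - t)).2 htan
      have hp0 : p - t ≠ 0 := sub_ne_zero.2 hpt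
      have hw0 : w - t ≠ 0 := sub_ne_zero.2 hwt
      have hoa : ∡ p t w =
          Module.Oriented.positiveOrientation.oangle (p - t) (w - t) := rfl
      rcases h0 with h | h | h | h
      · exact absurd h hp0
      · exact absurd h hw0
      · rw [hoa, h]; exact Real.Angle.two_zsmul_coe_div_two Real.pi
      · rw [hoa, h]; exact Real.Angle.two_zsmul_neg_pi_div_two
    have e3 : ∡ x w t = (Real.pi : Real.Angle) - (2 : ℤ) • ∡ w t x := by
      have := EuclideanGeometry.Sphere.oangle_eq_pi_sub_two_zsmul_oangle_center_left
        hxs hts hxt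
      exact this
    have e4 := EuclideanGeometry.Sphere.oangle_center_eq_two_zsmul_oangle hts hys hxs hyt hxy'.symm
    have e5 : (2 : ℤ) • ∡ p t x = (2 : ℤ) • ∡ p t w + (2 : ℤ) • ∡ w t x := by
      rw [← smul_add, e1]
    rw [e5, e2, ← e4, EuclideanGeometry.oangle_rev x w t, e3, neg_sub,
      sub_eq_add_neg, Real.Angle.neg_coe_pi]
    exact add_comm _ _
  -- unoriented tangent–chord dichotomy
  have hcosA : Real.cos (∠ p t x) = (∡ p t x).cos := by
    rw [angle_eq_abs_oangle_toReal hpt hxt, Real.cos_abs, Real.Angle.cos_toReal]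
  have hcosB : Real.cos (∠ t y x) = (∡ t y x).cos := by
    rw [angle_eq_abs_oangle_toReal hty hxy', Real.cos_abs, Real.Angle.cos_toReal]
  have habs : |Real.cos (∠ p t x)| = |Real.cos (∠ t y x)| := by
    rw [hcosA, hcosB]; exact Real.Angle.abs_cos_eq_of_two_zsmul_eq key
  have hmemA : ∠ p t x ∈ Set.Icc 0 Real.pi := ⟨angle_nonneg _ _ _, angle_le_pi _ _ _⟩
  have hmemB : ∠ t y x ∈ Set.Icc 0 Real.pi := ⟨angle_nonneg _ _ _, angle_le_pi _ _ _⟩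
  have hdich : ∠ p t x = ∠ t y x ∨ ∠ p t x = Real.pi - ∠ t y x := by
    rcases abs_eq_abs.1 habs with h | h
    · exact Or.inl (Real.injOn_cos hmemA hmemB h)
    · refine Or.inr (Real.injOn_cos hmemA ⟨by linarith [hmemB.2], by linarith [hmemB.1]⟩ ?_)
      rw [Real.cos_pi_sub]; exact h
  -- chord length from the inscribed angle at t
  have hchord : dist x y = 2 * r * Real.sin (∠ x t y) := by
    have hd := EuclideanGeometry.Sphere.dist_div_sin_oangle_eq_two_mul_radius
      hxs hts hys hxt hxy' hty
    have habs2 : |(∡ x t y).sin| = Real.sin (∠ x t y) := by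
      rw [← Real.Angle.sin_toReal, angle_eq_abs_oangle_toReal hxt hyt,
        abs_sin_eq_sin_abs (Real.Angle.abs_toReal_le_pi _)]
    rw [habs2] at hd
    have hsin0 : Real.sin (∠ x t y) ≠ 0 := by
      have h1 : 0 < ∠ x t y := by
        rcases (angle_nonneg x t y).lt_or_eq with h | h
        · exact h
        · exact absurd (by rw [angle_comm]; exact h.symm) hθ0
      have h2 : ∠ x t y < Real.pi := by
        rcases (angle_le_pi x t y).lt_or_eq with h | h
        · exact h
        · exact absurd (by rw [angle_comm]; exact h) hθπ
      exact (Real.sin_pos_of_pos_of_lt_pi h1 h2).ne'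
    rw [div_eq_iff hsin0] at hd
    rw [hd]
  -- unoriented angle chase
  have h1 : ∠ p x y = Real.pi := hxy.angle₁₂₃_eq_pi
  have htpx : ∠ t p x = ∠ t p y := angle_eq_angle_of_angle_eq_pi t h1
  have hsup : ∠ t x p + ∠ t x y = Real.pi := angle_add_angle_eq_pi_of_angle_eq_pi t h1
  have tri1 : ∠ p t x + ∠ t x p + ∠ x p t = Real.pi :=
    angle_add_angle_add_angle_eq_pi x htp
  have tri2 : ∠ t x y + ∠ x y t + ∠ y t x = Real.pi :=
    angle_add_angle_add_angle_eq_pi y hxt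
  have hxpt : ∠ x p t = ∠ t p y := by rw [angle_comm]; exact htpx
  have hβ : ∠ t y x = ∠ x y t := angle_comm _ _ _
  have hθ : ∠ x t y = ∠ y t x := angle_comm _ _ _
  rcases hdich with hγ | hγ
  · -- tangent–chord case: everything works out
    have harg : ∠ t p y + 2 * ∠ x y t = Real.pi - ∠ x t y := by
      rw [hθ]; rw [hβ] at hγ; linarith
    rw [harg, Real.sin_pi_sub]
    exact hchord
  · -- degenerate case is impossible
    exfalso
    rw [hβ] at hγ
    have hθpos : 0 < ∠ y t x :=
      (angle_nonneg y t x).lt_of_ne (Ne.symm hθ0)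
    have hαpos : 0 ≤ ∠ t p y := angle_nonneg _ _ _
    linarith
end

section
/- Let p, w, t, x, y be points in the Euclidean plane EuclideanSpace ℝ (Fin 2), let r > 0, and suppose t, x, y lie on the circle of center w and radius r, the segment pt is tangent to the circle at t (⟪p − t, w − t⟫ = 0 and p ≠ t), the points t, x, y are pairwise distinct, x lies strictly between p and y, and the chord equals the tangent: dist x y = dist p t. Let α = ∠ x p t and β = ∠ p t x. Then sin (α + β) = φ * sin β, where φ = (1 + √5)/2 is the golden ratio. -/
open RealInnerProductSpace EuclideanGeometry

/-- Equation (13) of the paper: in the golden-ratio tangent–secant configuration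
(chord equals tangent), with `α = ∠ x p t` and `β = ∠ p t x`, one has
`sin (α + β) = φ * sin β` where `φ = (1 + √5)/2`. -/
theorem tangent_secant_golden_sine_relation
    (p w t x y : EuclideanSpace ℝ (Fin 2)) (r : ℝ) (hr : 0 < r)
    (ht : dist w t = r) (hx : dist w x = r) (hy : dist w y = r)
    (htan : ⟪p - t, w - t⟫ = 0) (hpt : p ≠ t)
    (htx : t ≠ x) (hty : t ≠ y) (hxy' : x ≠ y)
    (hxy : Sbtw ℝ p x y)
    (hchord : dist x y = dist p t) :
    Real.sin (∠ x p t + ∠ p t x) = (1 + Real.sqrt 5) / 2 * Real.sin (∠ p t x) := by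
  set s := Real.sqrt 5 with hs
  have hs2 : s ^ 2 = 5 := Real.sq_sqrt (by norm_num)
  have hs0 : (0:ℝ) ≤ s := Real.sqrt_nonneg 5
  set a := dist p t with ha
  set b := dist p x with hb
  have ha0 : 0 < a := dist_pos.2 hpt
  have hxp : x ≠ p := hxy.2.1
  have hb0 : 0 < b := by rw [hb, dist_comm]; exact dist_pos.2 hxp
  -- Power of a point: b * (b + a) = a^2
  have hpow : b * (b + a) = a ^ 2 := by
    obtain ⟨σ, ⟨hσ0, hσ1⟩, hσx⟩ := hxy.wbtw
    rw [AffineMap.lineMap_apply] at hσx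
    have hxpv : x -ᵥ p = σ • (y -ᵥ p) := by
      rw [← hσx]; simp
    have hσne0 : σ ≠ 0 := by
      rintro rfl; apply hxp; rw [← hσx]; simp
    have hσne1 : σ ≠ 1 := by
      rintro rfl; apply hxy'; rw [← hσx]; simp
    have hk : ∃ k : ℝ, k ≠ 1 ∧ y -ᵥ p = k • (x -ᵥ p) := by
      refine ⟨σ⁻¹, ?_, ?_⟩
      · rw [ne_eq, inv_eq_one]; exact hσne1
      · rw [hxpv, smul_smul, inv_mul_cancel₀ hσne0, one_smul]
    have hq : dist x w = dist y w := by rw [dist_comm x w, dist_comm y w, hx, hy]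
    have hpp := mul_dist_eq_abs_sub_sq_dist (hxy.wbtw.collinear.mem_affineSpan_of_mem_of_ne
      (p₃ := p) (by simp) (by simp) (by simp) hxy') hq
    -- dist x p * dist y p = |dist y w ^2 - dist p w ^2|
    have hyw : dist y w = r := by rw [dist_comm]; exact hy
    have hpyth : dist p w ^ 2 = a ^ 2 + r ^ 2 := by
      have h : p - w = (p - t) - (w - t) := by abel
      rw [dist_eq_norm, h, norm_sub_sq_real, htan, ← dist_eq_norm p t, ← dist_eq_norm w t,
        ht, ← ha]
      ring
    have hdist : dist p y = b + a := by
      have h := hxy.wbtw.dist_add_dist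
      linarith [h, hchord, hb]
    rw [hyw, hpyth] at hpp
    have : |r ^ 2 - (a ^ 2 + r ^ 2)| = a ^ 2 := by
      rw [show r ^ 2 - (a ^ 2 + r ^ 2) = -(a^2) by ring, abs_neg, abs_of_nonneg (sq_nonneg a)]
    rw [this, dist_comm x p, dist_comm y p, ← hb, hdist] at hpp
    linarith [hpp]
  -- golden ratio: a = (1+s)/2 * b
  have hgold : a = (1 + s) / 2 * b := by
    have hab : b < a := by nlinarith
    have hprod : (2*a - b - s*b) * (2*a - b + s*b) = 0 := by
      linear_combination (-4:ℝ)*hpow + (-b^2)*hs2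
    have hpos : 0 < 2*a - b + s*b := by nlinarith
    have h1 : 2*a - b - s*b = 0 := by
      rcases mul_eq_zero.1 hprod with h | h
      · exact h
      · linarith
    linarith
  -- Law of sines
  set u := p - t with hu
  set v := x - t with hv
  have hangβ : ∠ p t x = InnerProductGeometry.angle u v := rfl
  have hangγ : ∠ t x p = InnerProductGeometry.angle (u - v) (-v) := by
    have h1 : t - x = -v := by rw [hv, neg_sub]
    have h2 : p - x = u - v := by rw [hu, hv]; abel
    rw [show ∠ t x p = InnerProductGeometry.angle (t - x) (p - x) from rfl, h1, h2,
      InnerProductGeometry.angle_comm]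
  have hgram : ⟪u - v, u - v⟫ * ⟪-v, -v⟫ - ⟪u - v, -v⟫ * ⟪u - v, -v⟫
      = ⟪u, u⟫ * ⟪v, v⟫ - ⟪u, v⟫ * ⟪u, v⟫ := by
    simp only [inner_sub_left, inner_sub_right, inner_neg_left, inner_neg_right,
      real_inner_comm v u]
    ring
  have h1 := InnerProductGeometry.sin_angle_mul_norm_mul_norm u v
  have h2 := InnerProductGeometry.sin_angle_mul_norm_mul_norm (u - v) (-v)
  rw [hgram, norm_neg] at h2
  have hsines : Real.sin (∠ p t x) * (‖u‖ * ‖v‖)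
      = Real.sin (∠ t x p) * (‖u - v‖ * ‖v‖) := by
    rw [hangβ, hangγ, h1, h2]
  -- norms as distances
  have hnu : ‖u‖ = a := by rw [hu, ha, dist_eq_norm]
  have hnuv : ‖u - v‖ = b := by
    rw [hb, dist_eq_norm]; congr 1; simp only [hu, hv]; abel
  have hnv0 : ‖v‖ ≠ 0 := by
    simp only [hv, ne_eq, norm_eq_zero, sub_eq_zero]
    exact fun h => htx h.symm
  -- angle sum
  have hsum := angle_add_angle_add_angle_eq_pi (p₁ := t) (p₂ := x) p
    (fun h => htx h.symm)
  have hγ : ∠ t x p = Real.pi - (∠ x p t + ∠ p t x) := by linarith [hsum]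
  have hsinγ : Real.sin (∠ t x p) = Real.sin (∠ x p t + ∠ p t x) := by
    rw [hγ, Real.sin_pi_sub]
  rw [hnu, hnuv, hsinγ] at hsines
  have hfin : Real.sin (∠ p t x) * a = Real.sin (∠ x p t + ∠ p t x) * b := by
    apply mul_right_cancel₀ hnv0
    linear_combination hsines
  rw [hgold] at hfin
  apply mul_right_cancel₀ (ne_of_gt hb0)
  linear_combination -hfin
end

section
/- Let p, w, t, x, y be points in the Euclidean plane EuclideanSpace ℝ (Fin 2), let r > 0, and suppose t, x, y lie on the circle of center w and radius r, the segment pt is tangent to the circle at t (⟪p − t, w − t⟫ = 0 and p ≠ t), the points t, x, y are pairwise distinct, x lies strictly between p and y, and the chord equals the tangent: dist x y = dist p t. Let α = ∠ x p t and β = ∠ x y t. Then 2 * r * φ * (sin β)^2 = (dist x y) * sin α, where φ = (1 + √5)/2 is the golden ratio. -/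
open RealInnerProductSpace EuclideanGeometry

noncomputable section

instance inst_s9 : Fact (Module.finrank ℝ (EuclideanSpace ℝ (Fin 2)) = 2) := ⟨by simp⟩
instance inst_s9_2 : Module.Oriented ℝ (EuclideanSpace ℝ (Fin 2)) (Fin 2) :=
  ⟨Module.Basis.orientation (EuclideanSpace.basisFun (Fin 2) ℝ).toBasis⟩

/-- For distinct points, the absolute value of the sine of the oriented angle equals the sine
of the unoriented angle. -/
lemma abs_sin_oangle_eq {a b c : EuclideanSpace ℝ (Fin 2)} (ha : a ≠ b) (hc : c ≠ b) :
    |Real.Angle.sin (∡ a b c)| = Real.sin (∠ a b c) := by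
  rw [EuclideanGeometry.angle_eq_abs_oangle_toReal ha hc]
  nth_rw 1 [← Real.Angle.coe_toReal (∡ a b c), Real.Angle.sin_coe]
  rcases le_or_gt 0 (∡ a b c).toReal with h | h
  · rw [abs_of_nonneg h, abs_of_nonneg (Real.sin_nonneg_of_nonneg_of_le_pi h
      (Real.Angle.toReal_le_pi _))]
  · have h1 : Real.sin (∡ a b c).toReal ≤ 0 :=
      Real.sin_nonpos_of_nonpos_of_neg_pi_le h.le (Real.Angle.neg_pi_lt_toReal _).le
    rw [abs_of_neg h, Real.sin_neg, abs_of_nonpos h1]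

set_option maxHeartbeats 1000000 in
/-- Equation (14) of the paper, rewritten: in the golden-ratio tangent–secant
configuration (chord equals tangent), with `α = ∠ x p t` and `β = ∠ x y t`, one has
`2 r φ sin² β = (dist x y) * sin α` where `φ = (1 + √5)/2`. -/
theorem tangent_secant_golden_sine_sq_relation
    (p w t x y : EuclideanSpace ℝ (Fin 2)) (r : ℝ) (hr : 0 < r)
    (ht : dist w t = r) (hx : dist w x = r) (hy : dist w y = r)
    (htan : ⟪p - t, w - t⟫ = 0) (hpt : p ≠ t)
    (htx : t ≠ x) (hty : t ≠ y) (hxy' : x ≠ y)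
    (hxy : Sbtw ℝ p x y)
    (hchord : dist x y = dist p t) :
    2 * r * ((1 + Real.sqrt 5) / 2) * Real.sin (∠ x y t) ^ 2 =
      dist x y * Real.sin (∠ x p t) := by
  set φ : ℝ := (1 + Real.sqrt 5) / 2 with hφdef
  have hwt : w ≠ t := by
    intro h; rw [h, dist_self] at ht; exact hr.ne ht
  have hwtnorm : ‖w - t‖ = r := by rw [← dist_eq_norm]; exact ht
  -- the sphere
  set s : EuclideanGeometry.Sphere (EuclideanSpace ℝ (Fin 2)) := ⟨w, r⟩ with hsdef
  have hts : t ∈ s := by simp [s, EuclideanGeometry.mem_sphere, dist_comm, ht]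
  have hxs : x ∈ s := by simp [s, EuclideanGeometry.mem_sphere, dist_comm, hx]
  have hys : y ∈ s := by simp [s, EuclideanGeometry.mem_sphere, dist_comm, hy]
  -- Pythagoras: dist p w ^ 2 = dist p t ^ 2 + r ^ 2
  have hpw : dist p w ^ 2 = dist p t ^ 2 + r ^ 2 := by
    have h1 : p - w = (p - t) - (w - t) := by abel
    rw [dist_eq_norm, dist_eq_norm, h1, @norm_sub_sq_real, htan, hwtnorm]
    ring
  -- collinearity data from Sbtw
  have hpx : p ≠ x := hxy.ne_left.symm
  obtain ⟨t₀, ht₀mem, hx_eq⟩ := hxy.wbtw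
  have ht₀0 : t₀ ≠ 0 := by
    intro h; rw [h] at hx_eq; simp [AffineMap.lineMap_apply] at hx_eq
    first
      | exact hpx hx_eq
      | exact hpx hx_eq.symm
  have ht₀1 : t₀ ≠ 1 := by
    intro h; rw [h] at hx_eq; simp [AffineMap.lineMap_apply] at hx_eq
    first
      | exact hxy' hx_eq.symm
      | exact hxy' hx_eq
  have hx_vsub : x - p = t₀ • (y - p) := by
    have h2 := hx_eq
    simp only [AffineMap.lineMap_apply, vsub_eq_sub, vadd_eq_add] at h2
    rw [← h2]; abel
  -- power of the point
  have hpow : dist x p * dist y p = dist p t ^ 2 := by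
    have hk : ∃ k : ℝ, k ≠ 1 ∧ y -ᵥ p = k • (x -ᵥ p) := by
      refine ⟨t₀⁻¹, by simp [inv_eq_one, ht₀1], ?_⟩
      rw [vsub_eq_sub, vsub_eq_sub, hx_vsub, smul_smul, inv_mul_cancel₀ ht₀0, one_smul]
    have hq : dist x w = dist y w := by rw [dist_comm x w, dist_comm y w, hx, hy]
    have h3 := EuclideanGeometry.mul_dist_eq_abs_sub_sq_dist
      (hxy.wbtw.collinear.mem_affineSpan_of_mem_of_ne (p₁ := x) (p₂ := y) (p₃ := p) (by simp) (by simp) (by simp) hxy') hq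
    rw [h3, dist_comm y w, hy, hpw]
    rw [abs_of_nonpos (by nlinarith [sq_nonneg (dist p t)])]
    ring
  -- distances
  have hc0 : 0 < dist x y := dist_pos.2 hxy'
  have ha0 : 0 < dist p x := dist_pos.2 hpx
  have hsum : dist p x + dist x y = dist p y := hxy.wbtw.dist_add_dist
  have h5 : Real.sqrt 5 ^ 2 = 5 := Real.sq_sqrt (by norm_num)
  have hφsq : φ ^ 2 = φ + 1 := by rw [hφdef]; linear_combination (1/4 : ℝ) * h5
  have hφ1 : 1 < φ := by
    have h1 : (1:ℝ) < Real.sqrt 5 := by nlinarith [Real.sqrt_nonneg 5]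
    rw [hφdef]; linarith
  have hpow' : dist p x * (dist p x + dist x y) = dist x y ^ 2 := by
    rw [hsum, hchord, dist_comm p x, dist_comm p y]
    exact hpow
  have hgold : φ * dist p x = dist x y := by
    set a := dist p x with hadef
    set c := dist x y with hcdef
    have hfact : (c - φ * a) * (c + a * (φ - 1)) = 0 := by
      linear_combination (-1 : ℝ) * hpow' - a ^ 2 * hφsq
    rcases mul_eq_zero.1 hfact with h | h
    · linarith
    · nlinarith
  -- chord and inscribed angle: dist x t = 2 * r * sin β
  have hsinβ : dist x t = 2 * r * Real.sin (∠ x y t) := by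
    have h4 := EuclideanGeometry.Sphere.dist_div_sin_oangle_eq_two_mul_radius hxs hys hts
      hxy' htx.symm hty.symm
    rw [abs_sin_oangle_eq hxy' hty] at h4
    have hsrad : s.radius = r := rfl
    rw [hsrad] at h4
    have hsin_ne : Real.sin (∠ x y t) ≠ 0 := by
      intro h0
      rw [h0, div_zero] at h4
      linarith
    rw [div_eq_iff hsin_ne] at h4
    exact h4
  -- tangent-chord: 2 • ∡ x t p = 2 • ∡ x y t
  have htc : (2 : ℤ) • ∡ x t p = (2 : ℤ) • ∡ x y t := by
    have hins : ∡ x s.center t = (2 : ℤ) • ∡ x y t :=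
      EuclideanGeometry.Sphere.oangle_center_eq_two_zsmul_oangle hxs hys hts hxy'.symm hty.symm
    have hiso : ∡ t s.center x = (Real.pi : Real.Angle) - (2 : ℤ) • ∡ x t s.center :=
      EuclideanGeometry.Sphere.oangle_eq_pi_sub_two_zsmul_oangle_center_right hts hxs htx
    have hadd : ∡ x t s.center + ∡ s.center t p = ∡ x t p :=
      EuclideanGeometry.oangle_add htx.symm hwt hpt
    have hright : (2 : ℤ) • ∡ s.center t p = (Real.pi : Real.Angle) := by
      have hangle : ∠ w t p = Real.pi / 2 := by
        rw [EuclideanGeometry.angle, vsub_eq_sub, vsub_eq_sub,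
          ← InnerProductGeometry.inner_eq_zero_iff_angle_eq_pi_div_two, real_inner_comm]
        exact htan
      have hcases := EuclideanGeometry.oangle_eq_angle_or_eq_neg_angle
        (show w ≠ t from hwt) (show p ≠ t from hpt)
      have hwc : s.center = w := rfl
      rcases hcases with h | h <;> rw [hwc, h, hangle]
      · rw [← Real.Angle.coe_zsmul,
          show ((2 : ℤ) • (Real.pi / 2) : ℝ) = Real.pi by rw [zsmul_eq_mul]; push_cast; ring]
      · rw [← Real.Angle.coe_neg, ← Real.Angle.coe_zsmul,
          show ((2 : ℤ) • (-(Real.pi / 2)) : ℝ) = -Real.pi by rw [zsmul_eq_mul]; push_cast; ring,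
          Real.Angle.coe_neg, Real.Angle.neg_coe_pi]
    calc (2 : ℤ) • ∡ x t p = (2 : ℤ) • ∡ x t s.center + (2 : ℤ) • ∡ s.center t p := by
          rw [← smul_add, hadd]
      _ = (2 : ℤ) • ∡ x t s.center + (Real.pi : Real.Angle) := by rw [hright]
      _ = ((Real.pi : Real.Angle) - ∡ t s.center x) + (Real.pi : Real.Angle) := by
          rw [hiso]; abel
      _ = - ∡ t s.center x + (2 : ℤ) • (Real.pi : Real.Angle) := by abel
      _ = ∡ x s.center t := by
          rw [Real.Angle.two_zsmul_coe_pi, EuclideanGeometry.oangle_rev x s.center t,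
            add_zero, neg_neg]
      _ = (2 : ℤ) • ∡ x y t := hins
  -- hence sin (∠ x t p) = sin (∠ x y t)
  have hsineq : Real.sin (∠ x t p) = Real.sin (∠ x y t) := by
    rw [← abs_sin_oangle_eq (show x ≠ t from htx.symm) (show p ≠ t from hpt),
      ← abs_sin_oangle_eq hxy' hty]
    exact Real.Angle.abs_sin_eq_of_two_zsmul_eq htc
  -- non-collinearity of p, x, t
  have hncol : ¬ Collinear ℝ ({p, x, t} : Set (EuclideanSpace ℝ (Fin 2))) := by
    intro hcol
    rw [collinear_iff_of_mem (show t ∈ ({p, x, t} : Set _) by simp)] at hcol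
    obtain ⟨v, hv⟩ := hcol
    obtain ⟨ap, hap⟩ := hv p (by simp)
    obtain ⟨ax, hax⟩ := hv x (by simp)
    have hap0 : ap ≠ 0 := by
      intro h; rw [h, zero_smul, zero_vadd] at hap; exact hpt hap
    have hxt : x - t = (ax / ap) • (p - t) := by
      have hps : p - t = ap • v := by rw [hap, vadd_eq_add, add_sub_cancel_right]
      have hxs' : x - t = ax • v := by rw [hax, vadd_eq_add, add_sub_cancel_right]
      rw [hxs', hps, smul_smul, div_mul_cancel₀ _ hap0]
    have hdx : dist w x ^ 2 = r ^ 2 + (ax / ap) ^ 2 * ‖p - t‖ ^ 2 := by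
      have h1 : w - x = (w - t) - (ax / ap) • (p - t) := by
        rw [← hxt]; abel
      rw [dist_eq_norm, h1, @norm_sub_sq_real, inner_smul_right, real_inner_comm, htan,
        norm_smul, Real.norm_eq_abs, mul_pow, sq_abs, hwtnorm]
      ring
    rw [hx] at hdx
    have hpt' : ‖p - t‖ ≠ 0 := by
      rw [← dist_eq_norm]; exact (dist_pos.2 hpt).ne'
    have hz : (ax / ap) = 0 := by
      by_contra h
      have h1 : 0 < (ax / ap) ^ 2 * ‖p - t‖ ^ 2 := by
        have := (norm_nonneg (p - t)).lt_of_ne' hpt'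
        positivity
      nlinarith
    rw [hz, zero_smul, sub_eq_zero] at hxt
    exact htx hxt.symm
  -- law of sines in triangle p x t via its circumsphere
  have hlos : dist x t * Real.sin (∠ x t p) = dist x p * Real.sin (∠ x p t) := by
    have hind : AffineIndependent ℝ ![p, x, t] :=
      affineIndependent_iff_not_collinear_set.2 hncol
    let T : Affine.Triangle ℝ (EuclideanSpace ℝ (Fin 2)) := ⟨![p, x, t], hind⟩
    have hpm : p ∈ T.circumsphere := T.mem_circumsphere 0
    have hxm : x ∈ T.circumsphere := T.mem_circumsphere 1
    have htm : t ∈ T.circumsphere := T.mem_circumsphere 2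
    have h1 := EuclideanGeometry.Sphere.dist_div_sin_oangle_eq_two_mul_radius hxm hpm htm
      hpx.symm htx.symm hpt
    have h2 := EuclideanGeometry.Sphere.dist_div_sin_oangle_eq_two_mul_radius hxm htm hpm
      htx.symm hpx.symm hpt.symm
    rw [abs_sin_oangle_eq hpx.symm (show t ≠ p from fun h => hpt h.symm)] at h1
    rw [abs_sin_oangle_eq (show x ≠ t from htx.symm) hpt] at h2
    have hs1 : Real.sin (∠ x p t) ≠ 0 := by
      apply EuclideanGeometry.sin_ne_zero_of_not_collinear
      intro h; apply hncol
      have hset : ({x, p, t} : Set (EuclideanSpace ℝ (Fin 2))) = {p, x, t} :=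
        Set.insert_comm x p {t}
      rwa [hset] at h
    have hs2 : Real.sin (∠ x t p) ≠ 0 := by
      apply EuclideanGeometry.sin_ne_zero_of_not_collinear
      intro h; apply hncol
      have hset : ({x, t, p} : Set (EuclideanSpace ℝ (Fin 2))) = {p, x, t} := by
        rw [Set.pair_comm t p, Set.insert_comm x p]
      rwa [hset] at h
    have h12 := h1.trans h2.symm
    field_simp at h12
    linear_combination h12
  -- conclude
  rw [hsineq, hsinβ, dist_comm x p] at hlos
  rw [← hgold]
  calc 2 * r * φ * Real.sin (∠ x y t) ^ 2
      = φ * (2 * r * Real.sin (∠ x y t) * Real.sin (∠ x y t)) := by ring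
    _ = φ * (dist p x * Real.sin (∠ x p t)) := by rw [hlos]
    _ = φ * dist p x * Real.sin (∠ x p t) := by ring

end
end

section
/- Let p, w, t, x, y be points in the Euclidean plane EuclideanSpace ℝ (Fin 2), let r > 0, and suppose t, x, y lie on the circle of center w and radius r, the segment pt is tangent to the circle at t (⟪p − t, w − t⟫ = 0 and p ≠ t), x lies strictly between p and y, and the secant passes through the center so that the chord is a diameter: dist x y = 2 r. If moreover the tangent equals the chord, dist p t = 2 r, then dist p x = (√5 − 1) * r, dist p y = (√5 + 1) * r = φ * dist p t with φ = (1 + √5)/2 the golden ratio, and the angle α = ∠ t p y satisfies tan α = 1/2. -/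
open RealInnerProductSpace EuclideanGeometry

/-- Figure 8 of the paper: tangent–secant configuration where the chord is a diameter
(`dist x y = 2r`) and the tangent equals the chord (`dist p t = 2r`). Then
`dist p x = (√5 − 1) r`, `dist p y = (√5 + 1) r = φ * dist p t`, and the angle
`α = ∠ t p y` satisfies `tan α = 1/2`. -/
theorem tangent_secant_diameter_case
    (p w t x y : EuclideanSpace ℝ (Fin 2)) (r : ℝ) (hr : 0 < r)
    (ht : dist w t = r) (hx : dist w x = r) (hy : dist w y = r)
    (htan : ⟪p - t, w - t⟫ = 0) (hpt : p ≠ t)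
    (hxy : Sbtw ℝ p x y)
    (hdiam : dist x y = 2 * r)
    (hchord : dist p t = 2 * r) :
    dist p x = (Real.sqrt 5 - 1) * r ∧
      dist p y = (Real.sqrt 5 + 1) * r ∧
      dist p y = (1 + Real.sqrt 5) / 2 * dist p t ∧
      Real.tan (∠ t p y) = 1 / 2 := by
  have h90 : ∠ p t w = Real.pi / 2 :=
    (InnerProductGeometry.inner_eq_zero_iff_angle_eq_pi_div_two (p - t) (w - t)).1 htan
  have hpyth : dist p w * dist p w = dist p t * dist p t + dist w t * dist w t :=
    (EuclideanGeometry.dist_sq_eq_dist_sq_add_dist_sq_iff_angle_eq_pi_div_two p t w).2 h90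
  have hpw : dist p w = Real.sqrt 5 * r := by
    have h2 : dist p w ^ 2 = 5 * r ^ 2 := by
      rw [ht, hchord] at hpyth; nlinarith [hpyth]
    have h3 : Real.sqrt (dist p w ^ 2) = Real.sqrt (5 * r ^ 2) := by rw [h2]
    rwa [Real.sqrt_sq dist_nonneg, Real.sqrt_mul (by norm_num : (0:ℝ) ≤ 5),
      Real.sqrt_sq hr.le] at h3
  have hxwy : Wbtw ℝ x w y := by
    apply dist_add_dist_eq_iff.1
    rw [dist_comm x w, hx, hy, hdiam]; ring
  have hpwy : Wbtw ℝ p w y := hxy.wbtw.trans_right hxwy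
  have hpy : dist p y = (Real.sqrt 5 + 1) * r := by
    have := hpwy.dist_add_dist
    rw [hpw, hy] at this; linarith
  have hpx : dist p x = (Real.sqrt 5 - 1) * r := by
    have := hxy.wbtw.dist_add_dist
    rw [hdiam, hpy] at this; linarith
  have hwp : w ≠ p := by
    intro h
    rw [h, dist_self] at hpw
    have h5 : 0 < Real.sqrt 5 := Real.sqrt_pos.2 (by norm_num)
    nlinarith
  obtain ⟨s, hs, hws⟩ := hpwy
  have hvy : w -ᵥ p = s • (y -ᵥ p) := by
    rw [← hws, AffineMap.lineMap_apply, vadd_vsub]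
  have hs0 : 0 < s := by
    rcases lt_or_eq_of_le hs.1 with h | h
    · exact h
    · exfalso; apply hwp
      rw [← hws, ← h, AffineMap.lineMap_apply, zero_smul, zero_vadd]
  have hang : ∠ t p y = ∠ t p w := by
    rw [EuclideanGeometry.angle, EuclideanGeometry.angle, hvy,
      InnerProductGeometry.angle_smul_right_of_pos _ _ hs0]
  have htanval : Real.tan (∠ t p y) = 1 / 2 := by
    rw [hang]
    have h90' : ∠ w t p = Real.pi / 2 := by rw [EuclideanGeometry.angle_comm]; exact h90
    rw [EuclideanGeometry.tan_angle_of_angle_eq_pi_div_two h90', ht, hchord]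
    field_simp
  exact ⟨hpx, hpy, by rw [hpy, hchord]; ring, htanval⟩
end
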